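/- Let Ψ_j^HO(x,k) = (2^j j!)^{-1/2} (b/π)^{1/4} e^{-b(x - k/b)²/2} H_j(b^{1/2}(x - k/b)) be the normalized harmonic oscillator eigenfunction. Then there is a constant c_j > 0 depending only on j such that for all k ≥ 0, the L²-norm of (bx - k)² Ψ_j^HO(x,k) over the half-line x < 0 satisfies ‖(bx - k)² Ψ_j^HO(·,k)‖_{L²((-∞,0))} ≤ c_j b e^{-k²/(4b)}. -/

import Mathlib

open MeasureTheory

lemma aux_pow_le_exp (n : ℕ) (y : ℝ) : |y| ^ n ≤ (n.factorial : ℝ) * Real.exp |y| := by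
  have h2 := Real.sum_le_exp_of_nonneg (abs_nonneg y) (n + 1)
  have h3 : |y| ^ n / (n.factorial : ℝ) ≤
      ∑ i ∈ Finset.range (n + 1), |y| ^ i / (i.factorial : ℝ) := by
    refine Finset.single_le_sum (f := fun i => |y| ^ i / (i.factorial : ℝ))
      (fun i _ => by positivity) (Finset.self_mem_range_succ n)
  have hfac : (0 : ℝ) < (n.factorial : ℝ) := by positivity
  have h4 := h3.trans h2
  rw [div_le_iff₀ hfac] at h4
  rw [mul_comm ((n.factorial : ℝ)) (Real.exp |y|)]
  exact h4

lemma aux_integrable_pow_gauss (n : ℕ) :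
    Integrable (fun y : ℝ => y ^ n * Real.exp (-(y ^ 2) / 2)) := by
  have hbound : Integrable
      (fun y : ℝ => ((n.factorial : ℝ) * Real.exp 1) * Real.exp (-(1/4 : ℝ) * y ^ 2)) :=
    (integrable_exp_neg_mul_sq (by norm_num)).const_mul _
  refine hbound.mono' ?_ ?_
  · exact ((continuous_pow n).mul
      (Real.continuous_exp.comp (by continuity))).aestronglyMeasurable
  · filter_upwards with y
    rw [norm_mul, norm_pow, Real.norm_eq_abs, Real.norm_eq_abs,
      abs_of_pos (Real.exp_pos _)]
    have h1 : |y| ^ n ≤ (n.factorial : ℝ) * Real.exp |y| := aux_pow_le_exp n y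
    have h2 : |y| - y ^ 2 / 2 ≤ 1 + (-(1/4 : ℝ) * y ^ 2) := by
      nlinarith [sq_abs y, sq_nonneg (|y| / 2 - 1)]
    calc |y| ^ n * Real.exp (-(y ^ 2) / 2)
        ≤ ((n.factorial : ℝ) * Real.exp |y|) * Real.exp (-(y ^ 2) / 2) :=
          mul_le_mul_of_nonneg_right h1 (Real.exp_pos _).le
      _ = (n.factorial : ℝ) * Real.exp (|y| - y ^ 2 / 2) := by
          rw [mul_assoc, ← Real.exp_add]; ring_nf
      _ ≤ (n.factorial : ℝ) * Real.exp (1 + (-(1/4 : ℝ) * y ^ 2)) := by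
          have := Real.exp_le_exp.2 h2
          exact mul_le_mul_of_nonneg_left this (by positivity)
      _ = (n.factorial : ℝ) * Real.exp 1 * Real.exp (-(1/4 : ℝ) * y ^ 2) := by
          rw [Real.exp_add]; ring

lemma aux_integrable_poly_gauss (p : Polynomial ℝ) :
    Integrable (fun y : ℝ => p.eval y * Real.exp (-(y ^ 2) / 2)) := by
  induction p using Polynomial.induction_on' with
  | add p q hp hq =>
      simpa [Polynomial.eval_add, add_mul, Pi.add_def] using hp.add hq
  | monomial n a =>
      simp only [Polynomial.eval_monomial]
      have h := (aux_integrable_pow_gauss n).const_mul a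
      simpa [mul_assoc] using h

/-- With
`Ψ_j^HO(x,k) = (2^j j!)^{-1/2} (b/π)^{1/4} e^{-b(x-k/b)²/2} H_j(√b (x-k/b))`
the normalized harmonic oscillator eigenfunction, there is `c_j > 0` depending
only on `j` such that for all `b > 0` and `k ≥ 0`,
`‖(bx - k)² Ψ_j^HO(·,k)‖_{L²((-∞,0))} ≤ c_j b e^{-k²/(4b)}`. -/
theorem harmonic_oscillator_halfline_estimate (j : ℕ)
    (Ψ : ℝ → ℝ → ℝ → ℝ)
    (hΨ : ∀ b k x : ℝ, Ψ b k x =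
      ((2 ^ j * Nat.factorial j : ℝ)) ^ (-(1:ℝ)/2) * (b / Real.pi) ^ ((1:ℝ)/4)
        * Real.exp (-(b * (x - k / b) ^ 2) / 2)
        * ((Polynomial.hermite j).map (Int.castRingHom ℝ)).eval
            (b ^ ((1:ℝ)/2) * (x - k / b))) :
    ∃ c : ℝ, 0 < c ∧ ∀ b > (0:ℝ), ∀ k ≥ (0:ℝ),
      Real.sqrt (∫ x in Set.Iio (0:ℝ), ((b * x - k) ^ 2 * Ψ b k x) ^ 2)
        ≤ c * b * Real.exp (-(k ^ 2) / (4 * b)) := by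
  classical
  set H : Polynomial ℝ := (Polynomial.hermite j).map (Int.castRingHom ℝ) with hH
  set p : Polynomial ℝ := Polynomial.X ^ 4 * H ^ 2 with hp
  set q : ℝ → ℝ := fun y => p.eval y * Real.exp (-(y ^ 2) / 2) with hq
  have hpev : ∀ y : ℝ, p.eval y = y ^ 4 * (H.eval y) ^ 2 := by
    intro y; simp [hp]
  have hqnonneg : ∀ y, 0 ≤ q y := by
    intro y
    rw [hq]
    simp only
    rw [hpev y]
    positivity
  have hqInt : Integrable q := aux_integrable_poly_gauss p
  set I : ℝ := ∫ y, q y with hI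
  have hI0 : 0 ≤ I := integral_nonneg hqnonneg
  set N2 : ℝ := ((2 ^ j * Nat.factorial j : ℝ))⁻¹ with hN2
  have hfac : (0 : ℝ) < (2 ^ j * Nat.factorial j : ℝ) := by positivity
  have hN2pos : 0 < N2 := by positivity
  set A : ℝ := N2 * I / Real.sqrt Real.pi with hA
  have hA0 : 0 ≤ A := by positivity
  refine ⟨Real.sqrt A + 1, by positivity, ?_⟩
  intro b hb k hk
  set s : ℝ := b ^ ((1:ℝ)/2) with hs
  have hs0 : 0 < s := Real.rpow_pos_of_pos hb _
  have hs2 : s ^ 2 = b := by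
    rw [hs, ← Real.rpow_natCast (b ^ ((1:ℝ)/2)) 2, ← Real.rpow_mul hb.le]
    norm_num
  set t : ℝ := -(s * (k / b)) with ht
  have hy : ∀ x : ℝ, s * x + t = s * (x - k / b) := by
    intro x; rw [ht]; ring
  have hysq : ∀ x : ℝ, (s * x + t) ^ 2 = b * (x - k / b) ^ 2 := by
    intro x; rw [hy x, mul_pow, hs2]
  have hbx : ∀ x : ℝ, (b * x - k) ^ 2 = b * (s * x + t) ^ 2 := by
    intro x
    rw [hysq x]
    field_simp
  set B2 : ℝ := (b / Real.pi) ^ ((1:ℝ)/2) with hB2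
  -- pointwise identity
  have key : ∀ x : ℝ, ((b * x - k) ^ 2 * Ψ b k x) ^ 2
      = (N2 * B2 * b ^ 2) * (p.eval (s * x + t) * Real.exp (-((s * x + t) ^ 2))) := by
    intro x
    rw [hΨ b k x, ← hs, ← hy x, hpev]
    have hNsq : (((2 ^ j * Nat.factorial j : ℝ)) ^ (-(1:ℝ)/2)) ^ 2 = N2 := by
      rw [← Real.rpow_natCast (((2 ^ j * Nat.factorial j : ℝ)) ^ (-(1:ℝ)/2)) 2,
        ← Real.rpow_mul hfac.le]
      have h12 : (-(1:ℝ)/2) * ((2:ℕ):ℝ) = -1 := by norm_num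
      rw [h12, Real.rpow_neg_one]
    have hBsq : ((b / Real.pi) ^ ((1:ℝ)/4)) ^ 2 = B2 := by
      rw [hB2, ← Real.rpow_natCast ((b / Real.pi) ^ ((1:ℝ)/4)) 2,
        ← Real.rpow_mul (by positivity)]
      norm_num
    have hEsq : (Real.exp (-(b * (x - k / b) ^ 2) / 2)) ^ 2
        = Real.exp (-((s * x + t) ^ 2)) := by
      rw [sq, ← Real.exp_add, hysq x]
      congr 1
      ring
    rw [← hNsq, ← hBsq, ← hEsq, hbx x]
    ring
  have hC0 : (0:ℝ) ≤ N2 * B2 * b ^ 2 * Real.exp (-(k ^ 2) / (2 * b)) := by positivity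
  set C : ℝ := N2 * B2 * b ^ 2 * Real.exp (-(k ^ 2) / (2 * b)) with hC
  -- domination on Iio 0
  have hdom : ∀ x ∈ Set.Iio (0:ℝ), ((b * x - k) ^ 2 * Ψ b k x) ^ 2 ≤ C * q (s * x + t) := by
    intro x hx
    have hx0 : x < 0 := hx
    rw [key x]
    have hy2 : k ^ 2 / b ≤ (s * x + t) ^ 2 := by
      have h2 : k ^ 2 ≤ (b * x - k) ^ 2 := by
        nlinarith [mul_nonneg (mul_pos hb (neg_pos.2 hx0)).le hk, sq_nonneg (b * x)]
      rw [div_le_iff₀ hb]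
      rw [hbx x] at h2
      linarith
    have hee : Real.exp (-((s * x + t) ^ 2))
        ≤ Real.exp (-(k ^ 2) / (2 * b)) * Real.exp (-((s * x + t) ^ 2) / 2) := by
      rw [← Real.exp_add]
      apply Real.exp_le_exp.2
      have h3 : k ^ 2 / (2 * b) ≤ (s * x + t) ^ 2 / 2 := by
        have e1 : k ^ 2 / (2 * b) = k ^ 2 / b / 2 := by ring
        rw [e1]
        linarith
      have e2 : -(k ^ 2) / (2 * b) = -(k ^ 2 / (2 * b)) := by ring
      rw [e2]
      linarith
    have hP : 0 ≤ p.eval (s * x + t) := by rw [hpev]; positivity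
    have hK : (0:ℝ) ≤ N2 * B2 * b ^ 2 := by positivity
    calc (N2 * B2 * b ^ 2) * (p.eval (s * x + t) * Real.exp (-((s * x + t) ^ 2)))
        ≤ (N2 * B2 * b ^ 2) * (p.eval (s * x + t) *
            (Real.exp (-(k ^ 2) / (2 * b)) * Real.exp (-((s * x + t) ^ 2) / 2))) := by
          apply mul_le_mul_of_nonneg_left (mul_le_mul_of_nonneg_left hee hP) hK
      _ = C * q (s * x + t) := by rw [hC, hq]; ring
  have hInt : Integrable (fun x : ℝ => C * q (s * x + t)) :=
    ((hqInt.comp_add_right t).comp_mul_left' hs0.ne').const_mul C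
  have step1 : (∫ x in Set.Iio (0:ℝ), ((b * x - k) ^ 2 * Ψ b k x) ^ 2)
      ≤ ∫ x in Set.Iio (0:ℝ), C * q (s * x + t) := by
    apply integral_mono_of_nonneg
    · exact ae_of_all _ fun x => sq_nonneg _
    · exact hInt.restrict
    · exact (ae_restrict_iff' measurableSet_Iio).2 (ae_of_all _ hdom)
  have step2 : (∫ x in Set.Iio (0:ℝ), C * q (s * x + t)) ≤ ∫ x : ℝ, C * q (s * x + t) :=
    setIntegral_le_integral hInt (ae_of_all _ fun x => mul_nonneg hC0 (hqnonneg _))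
  have step3 : (∫ x : ℝ, C * q (s * x + t)) = C * (s⁻¹ * I) := by
    rw [integral_const_mul]
    congr 1
    rw [Measure.integral_comp_mul_left (fun u => q (u + t)) s,
      integral_add_right_eq_self (fun u => q u) t, smul_eq_mul,
      abs_of_pos (inv_pos.2 hs0)]
  have hCsI : C * (s⁻¹ * I) = A * b ^ 2 * Real.exp (-(k ^ 2) / (2 * b)) := by
    have hdiv : B2 = s / Real.pi ^ ((1:ℝ)/2) := by
      rw [hB2, hs, Real.div_rpow hb.le Real.pi_pos.le]
    have hspi : Real.sqrt Real.pi = Real.pi ^ ((1:ℝ)/2) := Real.sqrt_eq_rpow Real.pi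
    have hpipos : (0:ℝ) < Real.pi ^ ((1:ℝ)/2) := Real.rpow_pos_of_pos Real.pi_pos _
    rw [hC, hA, hdiv, hspi]
    field_simp
  have total : (∫ x in Set.Iio (0:ℝ), ((b * x - k) ^ 2 * Ψ b k x) ^ 2)
      ≤ A * b ^ 2 * Real.exp (-(k ^ 2) / (2 * b)) := by
    rw [← hCsI, ← step3]
    exact step1.trans step2
  have hfin := Real.sqrt_le_sqrt total
  refine hfin.trans ?_
  have he : (Real.exp (-(k ^ 2) / (4 * b))) ^ 2 = Real.exp (-(k ^ 2) / (2 * b)) := by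
    rw [sq, ← Real.exp_add]
    congr 1
    field_simp
    ring
  have hsq : A * b ^ 2 * Real.exp (-(k ^ 2) / (2 * b))
      = (Real.sqrt A * b * Real.exp (-(k ^ 2) / (4 * b))) ^ 2 := by
    rw [mul_pow, mul_pow, Real.sq_sqrt hA0, he]
  rw [hsq, Real.sqrt_sq (by positivity)]
  have hle : Real.sqrt A ≤ Real.sqrt A + 1 := by linarith
  have hbe : (0:ℝ) ≤ b * Real.exp (-(k ^ 2) / (4 * b)) := by positivity
  calc Real.sqrt A * b * Real.exp (-(k ^ 2) / (4 * b))
      = Real.sqrt A * (b * Real.exp (-(k ^ 2) / (4 * b))) := by ring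
    _ ≤ (Real.sqrt A + 1) * (b * Real.exp (-(k ^ 2) / (4 * b))) :=
        mul_le_mul_of_nonneg_right hle hbe
    _ = (Real.sqrt A + 1) * b * Real.exp (-(k ^ 2) / (4 * b)) := by ring
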